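/- Let s ≥ 6 and let a, b be integers with a odd. If the Kloosterman sum S(a,b; 2^s) = ∑*_{x mod 2^s} e((ax + b·x̄)/2^s) (sum over odd x, with x̄ the inverse of x modulo 2^s) is nonzero, then a ≡ b (mod 8). -/

import Mathlib

open scoped BigOperators
open Finset

/-- `e_q(x) = exp(2πi x/q)` for `x : ZMod q`. -/
noncomputable def eZMod (q : ℕ) (x : ZMod q) : ℂ :=
  Complex.exp (2 * Real.pi * Complex.I * (x.val : ℂ) / q)

/-- The (unnormalized) Kloosterman sum `S(a,b;q) = ∑*_{x mod q} e_q(ax + b x̄)`. -/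
noncomputable def klS (a b : ℤ) (q : ℕ) : ℂ :=
  ∑ x ∈ (Finset.range q).filter (fun x => Nat.Coprime x q),
    eZMod q ((a : ZMod q) * (x : ZMod q) + (b : ZMod q) * (x : ZMod q)⁻¹)

lemma root_pow (q : ℕ) (m : ℕ) :
    Complex.exp (2 * Real.pi * Complex.I / q) ^ m
      = Complex.exp (2 * Real.pi * Complex.I * m / q) := by
  rw [← Complex.exp_nat_mul]
  ring_nf

lemma eZMod_eq_pow (q : ℕ) (x : ZMod q) :
    eZMod q x = Complex.exp (2 * Real.pi * Complex.I / q) ^ x.val := by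
  rw [root_pow, eZMod]

lemma root_pow_q (q : ℕ) (hq : q ≠ 0) :
    Complex.exp (2 * Real.pi * Complex.I / q) ^ q = 1 := by
  rw [root_pow q, mul_div_assoc, div_self (Nat.cast_ne_zero.2 hq), mul_one,
    Complex.exp_two_pi_mul_I]

lemma eZMod_add (q : ℕ) [NeZero q] (x y : ZMod q) :
    eZMod q (x + y) = eZMod q x * eZMod q y := by
  have hq : q ≠ 0 := NeZero.ne q
  rw [eZMod_eq_pow, eZMod_eq_pow, eZMod_eq_pow, ← pow_add, ZMod.val_add]
  conv_rhs => rw [← Nat.div_add_mod (x.val + y.val) q]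
  rw [pow_add, pow_mul, root_pow_q q hq, one_pow, one_mul]

lemma eZMod_eq_one_iff (q : ℕ) [NeZero q] (x : ZMod q) :
    eZMod q x = 1 ↔ x = 0 := by
  constructor
  · intro hx
    rw [eZMod, Complex.exp_eq_one_iff] at hx
    obtain ⟨n, hn⟩ := hx
    have hq : (q : ℂ) ≠ 0 := Nat.cast_ne_zero.2 (NeZero.ne q)
    have hpi : (2 * (Real.pi : ℂ) * Complex.I) ≠ 0 := by
      simp [Real.pi_ne_zero, Complex.I_ne_zero]
    have h2 : (x.val : ℂ) = n * q := by
      field_simp at hn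
      apply mul_left_cancel₀ hpi
      rw [ZMod.natCast_val]
      rw [ZMod.natCast_val] at hn
      linear_combination (2 * (Real.pi:ℂ) * Complex.I) * hn
    have h3 : (x.val : ℤ) = n * q := by exact_mod_cast h2
    have hdvd : q ∣ x.val := by
      have : (q:ℤ) ∣ (x.val : ℤ) := ⟨n, by linarith⟩
      exact_mod_cast this
    exact (ZMod.val_eq_zero x).mp (Nat.eq_zero_of_dvd_of_lt hdvd (ZMod.val_lt x))
  · intro hx
    simp [hx, eZMod]

lemma klS_eq (a b : ℤ) (q : ℕ) [NeZero q] :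
    klS a b q = ∑ x ∈ Finset.univ.filter (fun x : ZMod q => IsUnit x),
      eZMod q ((a : ZMod q) * x + (b : ZMod q) * x⁻¹) := by
  rw [klS]
  refine Finset.sum_nbij' (fun x : ℕ => (x : ZMod q)) (fun y : ZMod q => y.val)
    ?_ ?_ ?_ ?_ ?_
  · intro x hx
    simp only [Finset.mem_filter, Finset.mem_range] at hx
    simp only [Finset.mem_filter, Finset.mem_univ, true_and]
    exact (ZMod.isUnit_iff_coprime x q).2 hx.2
  · intro y hy
    simp only [Finset.mem_filter, Finset.mem_univ, true_and] at hy
    simp only [Finset.mem_filter, Finset.mem_range]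
    exact ⟨ZMod.val_lt y, (ZMod.isUnit_iff_coprime y.val q).1
      (by rwa [ZMod.natCast_val, ZMod.cast_id])⟩
  · intro x hx
    simp only [Finset.mem_filter, Finset.mem_range] at hx
    exact ZMod.val_cast_of_lt hx.1
  · intro y hy
    show ((y.val : ℕ) : ZMod q) = y
    rw [ZMod.natCast_val, ZMod.cast_id]
  · intro x hx
    rfl

lemma shift_identity (s : ℕ) (hs : 6 ≤ s) (a b : ℤ) (x : ZMod (2^s)) (hx : IsUnit x) :
    (a : ZMod (2^s)) * (x + 2^(s-3)) + (b : ZMod (2^s)) * (x + 2^(s-3))⁻¹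
      = (2:ZMod (2^s))^(s-3) * ((a : ZMod (2^s)) - b)
        + ((a : ZMod (2^s)) * x + (b : ZMod (2^s)) * x⁻¹) := by
  have h2s : (2 : ZMod (2^s))^s = 0 := by
    have : ((2^s : ℕ) : ZMod (2^s)) = 0 := ZMod.natCast_self (2^s)
    rwa [Nat.cast_pow, Nat.cast_ofNat] at this
  have hcc : (2:ZMod (2^s))^(s-3) * (2:ZMod (2^s))^(s-3) = 0 := by
    rw [← pow_add]
    have h : s - 3 + (s - 3) = s + (s - 6) := by omega
    rw [h, pow_add, h2s, zero_mul]
  have hcu : ∀ u : ZMod (2^s), IsUnit u → (2:ZMod (2^s))^(s-3) * (u * u) = (2:ZMod (2^s))^(s-3) := by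
    intro u hu
    have hm : Nat.Coprime u.val (2^s) := by
      have := ZMod.val_coe_unit_coprime hu.unit
      rwa [IsUnit.unit_spec] at this
    have hodd : ¬ (2 ∣ u.val) := by
      intro h2
      have hdq : (2:ℕ) ∣ 2^s := dvd_pow_self 2 (by omega)
      have hcop : Nat.Coprime u.val 2 := Nat.Coprime.coprime_dvd_right hdq hm
      have : (2:ℕ) ∣ 1 := hcop ▸ Nat.dvd_gcd h2 dvd_rfl
      omega
    obtain ⟨k, hk⟩ : Odd (u.val : ℤ) := by
      rcases Nat.even_or_odd u.val with he | ho
      · exact absurd he.two_dvd hodd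
      · exact_mod_cast ho
    have h8 : (8 : ℤ) ∣ (u.val : ℤ)^2 - 1 := by
      have hexp : ((u.val : ℤ))^2 - 1 = 4 * (k * (k+1)) := by rw [hk]; ring
      obtain ⟨m, hm2⟩ := Int.even_mul_succ_self k
      exact ⟨m, by omega⟩
    have hu' : ((u.val : ℕ) : ZMod (2^s)) = u := by
      rw [ZMod.natCast_val, ZMod.cast_id]
    have key : ((2^(s-3) * ((u.val : ℤ)^2 - 1) : ℤ) : ZMod (2^s)) = 0 := by
      rw [ZMod.intCast_zmod_eq_zero_iff_dvd]
      have hse : ((2^s : ℕ) : ℤ) = 2^(s-3) * 8 := by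
        push_cast
        have h83 : (8:ℤ) = 2^3 := by norm_num
        rw [h83, ← pow_add]
        congr 1
        omega
      rw [hse]
      exact mul_dvd_mul_left _ h8
    have heq : (2:ZMod (2^s))^(s-3) * (u * u) - (2:ZMod (2^s))^(s-3)
        = ((2^(s-3) * ((u.val : ℤ)^2 - 1) : ℤ) : ZMod (2^s)) := by
      push_cast
      rw [hu']
      ring
    have := heq.trans key
    linear_combination this
  have hxu : x * x⁻¹ = 1 := ZMod.mul_inv_of_unit x hx
  have hxinvu : IsUnit x⁻¹ := ⟨⟨x⁻¹, x, by rw [mul_comm]; exact hxu, hxu⟩, rfl⟩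
  have hinv : (x + (2:ZMod (2^s))^(s-3))⁻¹ = x⁻¹ - (2:ZMod (2^s))^(s-3) * (x⁻¹ * x⁻¹) := by
    apply ZMod.inv_eq_of_mul_eq_one
    have he : (x + (2:ZMod (2^s))^(s-3)) * (x⁻¹ - (2:ZMod (2^s))^(s-3) * (x⁻¹ * x⁻¹))
        = x * x⁻¹ + (2:ZMod (2^s))^(s-3) * x⁻¹ - (x * x⁻¹) * ((2:ZMod (2^s))^(s-3) * x⁻¹)
          - ((2:ZMod (2^s))^(s-3) * (2:ZMod (2^s))^(s-3)) * (x⁻¹ * x⁻¹) := by ring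
    rw [he, hxu, hcc]
    ring
  rw [hinv]
  linear_combination (-(b : ZMod (2^s))) * (hcu x⁻¹ hxinvu)

/-- If `s ≥ 6`, `a` odd, and the Kloosterman sum `S(a,b;2^s)` is nonzero,
then `a ≡ b (mod 8)`. -/
theorem stmt_6 (s : ℕ) (hs : 6 ≤ s) (a b : ℤ) (ha : Odd a)
    (h : klS a b (2 ^ s) ≠ 0) : a ≡ b [ZMOD 8] := by
  haveI : NeZero (2^s) := ⟨pow_ne_zero s two_ne_zero⟩
  set c : ZMod (2^s) := (2:ZMod (2^s))^(s-3) with hc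
  have hnil : IsNilpotent c := by
    refine ⟨3, ?_⟩
    rw [hc, ← pow_mul]
    have h2s : (2 : ZMod (2^s))^s = 0 := by
      have : ((2^s : ℕ) : ZMod (2^s)) = 0 := ZMod.natCast_self (2^s)
      rwa [Nat.cast_pow, Nat.cast_ofNat] at this
    have he : (s-3)*3 = s + (2*s - 9) := by omega
    rw [he, pow_add, h2s, zero_mul]
  have hnil' : IsNilpotent (-c) := hnil.neg
  -- the shifted sum
  have hshift : klS a b (2^s) = eZMod (2^s) (c * ((a : ZMod (2^s)) - b)) * klS a b (2^s) := by
    rw [klS_eq a b (2^s)]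
    rw [Finset.mul_sum]
    refine Finset.sum_nbij' (fun x : ZMod (2^s) => x - c) (fun x : ZMod (2^s) => x + c)
      ?_ ?_ ?_ ?_ ?_
    · intro x hx
      simp only [Finset.mem_filter, Finset.mem_univ, true_and] at hx ⊢
      have := hnil'.isUnit_add_left_of_commute hx (Commute.all _ _)
      simpa [sub_eq_add_neg, add_comm] using this
    · intro x hx
      simp only [Finset.mem_filter, Finset.mem_univ, true_and] at hx ⊢
      have := hnil.isUnit_add_left_of_commute hx (Commute.all _ _)
      simpa [add_comm] using this
    · intro x _; ring
    · intro x _; ring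
    · intro x hx
      simp only [Finset.mem_filter, Finset.mem_univ, true_and] at hx
      have hux : IsUnit (x - c) := by
        have := hnil'.isUnit_add_left_of_commute hx (Commute.all _ _)
        simpa [sub_eq_add_neg, add_comm] using this
      have hid := shift_identity s hs a b (x - c) hux
      rw [sub_add_cancel] at hid
      rw [hid, eZMod_add]
  have he1 : eZMod (2^s) (c * ((a : ZMod (2^s)) - b)) = 1 := by
    by_contra hne
    have : (eZMod (2^s) (c * ((a : ZMod (2^s)) - b)) - 1) * klS a b (2^s) = 0 := by
      rw [sub_mul, one_mul, ← hshift, sub_self]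
    rcases mul_eq_zero.mp this with h1 | h2
    · exact hne (by linear_combination h1)
    · exact h h2
  have hz : c * ((a : ZMod (2^s)) - b) = 0 := (eZMod_eq_one_iff _ _).mp he1
  have hcast : (((2:ℤ)^(s-3) * (a - b) : ℤ) : ZMod (2^s)) = c * ((a : ZMod (2^s)) - b) := by
    push_cast
    rw [hc]
  have hz' : (((2:ℤ)^(s-3) * (a - b) : ℤ) : ZMod (2^s)) = 0 := by rw [hcast]; exact hz
  rw [ZMod.intCast_zmod_eq_zero_iff_dvd] at hz'
  have hse : ((2^s : ℕ) : ℤ) = 2^(s-3) * 8 := by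
    push_cast
    have h83 : (8:ℤ) = 2^3 := by norm_num
    rw [h83, ← pow_add]
    congr 1
    omega
  rw [hse] at hz'
  have h8 : (8:ℤ) ∣ a - b :=
    (mul_dvd_mul_iff_left (a := (2:ℤ)^(s-3)) (by positivity)).mp hz'
  have : a ≡ b [ZMOD (8:ℤ)] := Int.modEq_iff_dvd.mpr (by
    obtain ⟨t, ht⟩ := h8
    exact ⟨-t, by linarith⟩)
  exact_mod_cast this
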